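/- For finite disjoint sets C and C' of products, the BundleMVL-2 expected revenue satisfies R(C ∪ C') = α·R(C) + (1−α)·T(C,C'), where α = (v₀ + Σ_{i∈C}Σ_{j∈C} θ_{ij}) / (v₀ + Σ_{i∈C∪C'}Σ_{j∈C∪C'} θ_{ij}) lies in [0,1], and T(C,C') = (Σ_{i∈C'}Σ_{j∈C'} r̂_{ij}θ_{ij} + 2Σ_{i∈C}Σ_{j∈C'} r̂_{ij}θ_{ij}) / (Σ_{i∈C'}Σ_{j∈C'} θ_{ij} + 2Σ_{i∈C}Σ_{j∈C'} θ_{ij}). -/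

import Mathlib

open Finset

/-- BundleMVL-2 revenue decomposition: R(C ∪ C') = α·R(C) + (1−α)·T(C,C') with α ∈ [0,1]. -/
theorem bundle_revenue_decomposition {ι : Type*} [DecidableEq ι]
    (W : Finset ι) (r : ι → ℝ) (θ : ι → ι → ℝ) (v0 : ℝ)
    (hv0 : 0 < v0)
    (hr : ∀ i ∈ W, 0 < r i)
    (hθsymm : ∀ i j, θ i j = θ j i)
    (hθnn : ∀ i j, 0 ≤ θ i j)
    (hθdiag : ∀ i ∈ W, 0 < θ i i)
    (rhat : ι → ι → ℝ)
    (hrhat : ∀ i j, rhat i j = if i = j then r i else r i + r j)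
    (R : Finset ι → ℝ)
    (hR : ∀ C, R C = (∑ i ∈ C, ∑ j ∈ C, rhat i j * θ i j) /
        (v0 + ∑ i ∈ C, ∑ j ∈ C, θ i j))
    (C C' : Finset ι) (hC : C ⊆ W) (hC' : C' ⊆ W) (hdisj : Disjoint C C')
    (hTden : (∑ i ∈ C', ∑ j ∈ C', θ i j) + 2 * ∑ i ∈ C, ∑ j ∈ C', θ i j ≠ 0) :
    0 ≤ (v0 + ∑ i ∈ C, ∑ j ∈ C, θ i j) / (v0 + ∑ i ∈ C ∪ C', ∑ j ∈ C ∪ C', θ i j) ∧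
    (v0 + ∑ i ∈ C, ∑ j ∈ C, θ i j) / (v0 + ∑ i ∈ C ∪ C', ∑ j ∈ C ∪ C', θ i j) ≤ 1 ∧
    R (C ∪ C') =
      ((v0 + ∑ i ∈ C, ∑ j ∈ C, θ i j) / (v0 + ∑ i ∈ C ∪ C', ∑ j ∈ C ∪ C', θ i j)) * R C +
      (1 - (v0 + ∑ i ∈ C, ∑ j ∈ C, θ i j) / (v0 + ∑ i ∈ C ∪ C', ∑ j ∈ C ∪ C', θ i j)) *
        (((∑ i ∈ C', ∑ j ∈ C', rhat i j * θ i j) + 2 * ∑ i ∈ C, ∑ j ∈ C', rhat i j * θ i j) /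
         ((∑ i ∈ C', ∑ j ∈ C', θ i j) + 2 * ∑ i ∈ C, ∑ j ∈ C', θ i j)) := by

  have hsplit : ∀ f : ι → ι → ℝ, (∀ i j, f i j = f j i) →
      ∑ i ∈ C ∪ C', ∑ j ∈ C ∪ C', f i j =
        (∑ i ∈ C, ∑ j ∈ C, f i j) +
          ((∑ i ∈ C', ∑ j ∈ C', f i j) + 2 * ∑ i ∈ C, ∑ j ∈ C', f i j) := by
    intro f hf
    rw [Finset.sum_union hdisj]
    simp_rw [Finset.sum_union hdisj]
    rw [Finset.sum_add_distrib, Finset.sum_add_distrib]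
    have hc : ∑ i ∈ C', ∑ j ∈ C, f i j = ∑ i ∈ C, ∑ j ∈ C', f i j := by
      rw [Finset.sum_comm]; simp_rw [hf]
    rw [hc]; ring
  have hrsymm : ∀ i j, rhat i j * θ i j = rhat j i * θ j i := by
    intro i j
    rw [hθsymm i j, hrhat, hrhat]
    by_cases h : i = j
    · simp [h]
    · simp only [h, Ne.symm h, if_false]
      ring
  set SC := ∑ i ∈ C, ∑ j ∈ C, θ i j with hSC
  set ST := (∑ i ∈ C', ∑ j ∈ C', θ i j) + 2 * ∑ i ∈ C, ∑ j ∈ C', θ i j with hST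
  set NC := ∑ i ∈ C, ∑ j ∈ C, rhat i j * θ i j with hNC
  set NT := (∑ i ∈ C', ∑ j ∈ C', rhat i j * θ i j) +
      2 * ∑ i ∈ C, ∑ j ∈ C', rhat i j * θ i j with hNT
  have hθU : ∑ i ∈ C ∪ C', ∑ j ∈ C ∪ C', θ i j = SC + ST := hsplit θ hθsymm
  have hNU : ∑ i ∈ C ∪ C', ∑ j ∈ C ∪ C', rhat i j * θ i j = NC + NT :=
    hsplit _ hrsymm
  have hSCnn : 0 ≤ SC :=
    Finset.sum_nonneg fun i _ => Finset.sum_nonneg fun j _ => hθnn i j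
  have hSTnn : 0 ≤ ST := by
    have h1 : 0 ≤ ∑ i ∈ C', ∑ j ∈ C', θ i j :=
      Finset.sum_nonneg fun i _ => Finset.sum_nonneg fun j _ => hθnn i j
    have h2 : 0 ≤ ∑ i ∈ C, ∑ j ∈ C', θ i j :=
      Finset.sum_nonneg fun i _ => Finset.sum_nonneg fun j _ => hθnn i j
    rw [hST]; linarith
  have hDC : 0 < v0 + SC := by linarith
  have hDU : 0 < v0 + (SC + ST) := by linarith
  refine ⟨?_, ?_, ?_⟩
  · rw [hθU]
    positivity
  · rw [hθU, div_le_one hDU]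
    linarith
  · rw [hR, hR, hθU, hNU]
    rw [← hSC, ← hNC]
    field_simp
    ring
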